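/- Under Assumption 1, if p₁ > α and p₂ > 1, then at every mixed Nash equilibrium (σ¹*,σ²*) of the routing game the expected attack cost satisfies E_{σ²*}[C₂(μ)] = (1 − α/p₁)·Θ, where Θ is the max-flow value. -/

import Mathlib

open scoped BigOperators Classical

/-- A capacitated network given by its finite edge set, capacities, per-unit
transportation costs, and the (edge sets of its) `s`-`t` paths and loops. -/
structure Network where
  E : Type
  fin : Fintype E
  dec : DecidableEq E
  /-- edge capacities -/
  c : E → ℝ
  /-- per-unit transportation costs -/
  b : E → ℝ
  /-- the `s`-`t` paths, identified with their edge sets -/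
  P : Finset (Finset E)
  /-- the loops, identified with their edge sets -/
  L : Finset (Finset E)
  c_nonneg : ∀ e, 0 ≤ c e
  b_nonneg : ∀ e, 0 ≤ b e
  P_nonempty : P.Nonempty
  P_edges_nonempty : ∀ p ∈ P, p.Nonempty

attribute [instance] Network.fin Network.dec

namespace Network

variable (N : Network)

/-- All paths and loops. -/
noncomputable def Lam : Finset (Finset N.E) := N.P ∪ N.L

/-- The flow through edge `e` induced by the path/loop flow `y`. -/
noncomputable def edgeFlow (y : Finset N.E → ℝ) (e : N.E) : ℝ :=
  ∑ l ∈ N.Lam.filter (fun l => e ∈ l), y l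

/-- Feasibility of a path/loop flow: nonnegative, supported on paths and loops,
and respecting edge capacities. -/
def Feasible (y : Finset N.E → ℝ) : Prop :=
  (∀ l, 0 ≤ y l) ∧ (∀ l, l ∉ N.Lam → y l = 0) ∧ (∀ e, N.edgeFlow y e ≤ N.c e)

/-- The value `F(x)` of the initial flow: total flow on `s`-`t` paths. -/
noncomputable def val (y : Finset N.E → ℝ) : ℝ := ∑ p ∈ N.P, y p

/-- The value `F(x^μ)` of the effective flow after the attack `μ`:
only the flow on paths avoiding all disrupted edges survives. -/
noncomputable def effVal (y : Finset N.E → ℝ) (μ : Finset N.E) : ℝ :=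
  ∑ p ∈ N.P.filter (fun p => Disjoint p μ), y p

/-- Transportation cost `C₁(x) = Σ b_e x_e`. -/
noncomputable def C1 (y : Finset N.E → ℝ) : ℝ := ∑ e, N.b e * N.edgeFlow y e

/-- Cost of an attack, `C₂(μ) = Σ_{e ∈ μ} c_e`. -/
noncomputable def C2 (μ : Finset N.E) : ℝ := ∑ e ∈ μ, N.c e

/-- Transportation cost of a path. -/
noncomputable def pathCost (p : Finset N.E) : ℝ := ∑ e ∈ p, N.b e

/-- `α`: the minimum transportation cost over all `s`-`t` paths. -/
noncomputable def alpha : ℝ := sInf (N.pathCost '' ↑N.P)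

/-- A cut: a set of edges meeting every `s`-`t` path. -/
def IsCut (K : Finset N.E) : Prop := ∀ p ∈ N.P, ¬ Disjoint p K

/-- A minimum cut: a cut of minimum capacity. -/
def IsMinCut (K : Finset N.E) : Prop := N.IsCut K ∧ ∀ K', N.IsCut K' → N.C2 K ≤ N.C2 K'

/-- `Θ`: the maximum flow value. -/
noncomputable def Theta : ℝ := sSup (N.val '' {y | N.Feasible y})

/-- A maximum flow. -/
def IsMaxFlow (y : Finset N.E → ℝ) : Prop :=
  N.Feasible y ∧ ∀ z, N.Feasible z → N.val z ≤ N.val y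

/-- A maximum flow with minimum transportation cost (an element of `Ω`). -/
def IsMFMC (y : Finset N.E → ℝ) : Prop :=
  N.IsMaxFlow y ∧ ∀ z, N.IsMaxFlow z → N.C1 y ≤ N.C1 z

/-- Assumption 1: `x` is a max-flow with minimum transportation cost all of whose
positively used `s`-`t` paths have transportation cost exactly `α`. -/
def Assumption1 (x : Finset N.E → ℝ) : Prop :=
  N.IsMFMC x ∧ ∀ p ∈ N.P, 0 < x p → N.pathCost p = N.alpha

/-- Defender's payoff `u₁(x,μ) = p₁ F(x^μ) - C₁(x)`. -/
noncomputable def u1 (p1 : ℝ) (y : Finset N.E → ℝ) (μ : Finset N.E) : ℝ :=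
  p1 * N.effVal y μ - N.C1 y

/-- Attacker's payoff `u₂(x,μ) = p₂ F(x - x^μ) - C₂(μ)`. -/
noncomputable def u2 (p2 : ℝ) (y : Finset N.E → ℝ) (μ : Finset N.E) : ℝ :=
  p2 * (N.val y - N.effVal y μ) - N.C2 μ

/-- The defender's action set: feasible flows. -/
def Flow : Type := {y : Finset N.E → ℝ // N.Feasible y}

/-- A (finitely supported) mixed strategy of the defender. -/
def MixedF (σ : N.Flow →₀ ℝ) : Prop := (∀ y, 0 ≤ σ y) ∧ (σ.sum fun _ w => w) = 1

/-- A mixed strategy of the attacker. -/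
def MixedA (σ : Finset N.E → ℝ) : Prop := (∀ μ, 0 ≤ σ μ) ∧ ∑ μ, σ μ = 1

/-- Expectation of a function of the flow under the defender's mixed strategy. -/
noncomputable def expF (σ : N.Flow →₀ ℝ) (g : (Finset N.E → ℝ) → ℝ) : ℝ :=
  σ.sum fun y w => w * g y.1

/-- Expectation of a function of the attack under the attacker's mixed strategy. -/
noncomputable def expA (σ : Finset N.E → ℝ) (h : Finset N.E → ℝ) : ℝ :=
  ∑ μ, σ μ * h μ

/-- Expectation of a function of both actions under a mixed strategy profile. -/
noncomputable def expFA (σ1 : N.Flow →₀ ℝ) (σ2 : Finset N.E → ℝ)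
    (g : (Finset N.E → ℝ) → Finset N.E → ℝ) : ℝ :=
  σ1.sum fun y w => w * ∑ μ, σ2 μ * g y.1 μ

/-- Defender's expected payoff. -/
noncomputable def U1 (p1 : ℝ) (σ1 : N.Flow →₀ ℝ) (σ2 : Finset N.E → ℝ) : ℝ :=
  N.expFA σ1 σ2 (N.u1 p1)

/-- Attacker's expected payoff. -/
noncomputable def U2 (p2 : ℝ) (σ1 : N.Flow →₀ ℝ) (σ2 : Finset N.E → ℝ) : ℝ :=
  N.expFA σ1 σ2 (N.u2 p2)

/-- Mixed Nash equilibrium. -/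
def IsNE (p1 p2 : ℝ) (σ1 : N.Flow →₀ ℝ) (σ2 : Finset N.E → ℝ) : Prop :=
  N.MixedF σ1 ∧ N.MixedA σ2 ∧
  (∀ τ1, N.MixedF τ1 → N.U1 p1 τ1 σ2 ≤ N.U1 p1 σ1 σ2) ∧
  (∀ τ2, N.MixedA τ2 → N.U2 p2 σ1 τ2 ≤ N.U2 p2 σ1 σ2)

/-- Pure Nash equilibrium. -/
def IsPureNE (p1 p2 : ℝ) (x : Finset N.E → ℝ) (μ : Finset N.E) : Prop :=
  N.Feasible x ∧
  (∀ y, N.Feasible y → N.u1 p1 y μ ≤ N.u1 p1 x μ) ∧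
  (∀ ν, N.u2 p2 x ν ≤ N.u2 p2 x μ)

end Network


section Aux

namespace Network

variable (N : Network)

lemma aux_alpha_nonneg : 0 ≤ N.alpha := by
  obtain ⟨p, hp⟩ := N.P_nonempty
  refine le_csInf ⟨N.pathCost p, ⟨p, hp, rfl⟩⟩ ?_
  rintro b ⟨p', -, rfl⟩
  exact Finset.sum_nonneg fun e _ => N.b_nonneg e

lemma aux_alpha_le {p : Finset N.E} (hp : p ∈ N.P) : N.alpha ≤ N.pathCost p := by
  refine csInf_le ?_ ⟨p, hp, rfl⟩
  exact ((N.P : Set (Finset N.E)).toFinite.image _).bddBelow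

lemma aux_C1_eq (y : Finset N.E → ℝ) :
    N.C1 y = ∑ l ∈ N.Lam, N.pathCost l * y l := by
  unfold C1 edgeFlow pathCost
  calc (∑ e, N.b e * ∑ l ∈ N.Lam.filter (fun l => e ∈ l), y l)
      = ∑ e, ∑ l ∈ N.Lam, if e ∈ l then N.b e * y l else 0 := by
        refine Finset.sum_congr rfl fun e _ => ?_
        rw [Finset.mul_sum, Finset.sum_filter]
    _ = ∑ l ∈ N.Lam, ∑ e, if e ∈ l then N.b e * y l else 0 := Finset.sum_comm
    _ = ∑ l ∈ N.Lam, (∑ e ∈ l, N.b e) * y l := by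
        refine Finset.sum_congr rfl fun l _ => ?_
        rw [Finset.sum_mul, ← Finset.sum_filter]
        refine Finset.sum_congr ?_ fun e _ => rfl
        simp

lemma aux_alpha_val_le_C1 {y : Finset N.E → ℝ} (hy : N.Feasible y) :
    N.alpha * N.val y ≤ N.C1 y := by
  rw [aux_C1_eq, Network.val]
  have h1 : ∑ p ∈ N.P, N.alpha * y p ≤ ∑ l ∈ N.P, N.pathCost l * y l :=
    Finset.sum_le_sum fun p hp =>
      mul_le_mul_of_nonneg_right (N.aux_alpha_le hp) (hy.1 p)
  have h2 : ∑ l ∈ N.P, N.pathCost l * y l ≤ ∑ l ∈ N.Lam, N.pathCost l * y l := by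
    refine Finset.sum_le_sum_of_subset_of_nonneg (Finset.subset_union_left) ?_
    intro l _ _
    exact mul_nonneg (Finset.sum_nonneg fun e _ => N.b_nonneg e) (hy.1 l)
  calc N.alpha * ∑ p ∈ N.P, y p = ∑ p ∈ N.P, N.alpha * y p := Finset.mul_sum _ _ _
    _ ≤ ∑ l ∈ N.Lam, N.pathCost l * y l := h1.trans h2

lemma aux_val_sub_effVal_le_C2 {y : Finset N.E → ℝ} (hy : N.Feasible y)
    (μ : Finset N.E) : N.val y - N.effVal y μ ≤ N.C2 μ := by
  have hsplit : N.val y - N.effVal y μ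
      = ∑ p ∈ N.P.filter (fun p => ¬ Disjoint p μ), y p := by
    rw [Network.val, Network.effVal,
      ← Finset.sum_filter_add_sum_filter_not N.P (fun p => Disjoint p μ) y]
    ring
  rw [hsplit]
  have hPLam : N.P ⊆ N.Lam := Finset.subset_union_left
  have step1 : ∑ p ∈ N.P.filter (fun p => ¬ Disjoint p μ), y p
      ≤ ∑ l ∈ N.Lam.filter (fun l => ¬ Disjoint l μ), y l := by
    refine Finset.sum_le_sum_of_subset_of_nonneg ?_ fun l _ _ => hy.1 l
    exact Finset.filter_subset_filter _ hPLam
  have step2 : ∑ l ∈ N.Lam.filter (fun l => ¬ Disjoint l μ), y l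
      ≤ ∑ l ∈ N.Lam, ((μ.filter (fun e => e ∈ l)).card : ℝ) * y l := by
    rw [Finset.sum_filter]
    refine Finset.sum_le_sum fun l _ => ?_
    by_cases hdl : Disjoint l μ
    · rw [if_neg (not_not_intro hdl)]
      exact mul_nonneg (Nat.cast_nonneg _) (hy.1 l)
    · rw [if_pos hdl]
      have hcard : 1 ≤ (μ.filter (fun e => e ∈ l)).card := by
        obtain ⟨e, hel, heμ⟩ := Finset.not_disjoint_iff.mp hdl
        exact Finset.card_pos.mpr ⟨e, Finset.mem_filter.mpr ⟨heμ, hel⟩⟩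
      have : (1 : ℝ) ≤ ((μ.filter (fun e => e ∈ l)).card : ℝ) := by
        exact_mod_cast hcard
      nlinarith [hy.1 l]
  have step3 : ∑ l ∈ N.Lam, ((μ.filter (fun e => e ∈ l)).card : ℝ) * y l
      = ∑ e ∈ μ, N.edgeFlow y e := by
    calc ∑ l ∈ N.Lam, ((μ.filter (fun e => e ∈ l)).card : ℝ) * y l
        = ∑ l ∈ N.Lam, ∑ e ∈ μ, (if e ∈ l then y l else 0) := by
          refine Finset.sum_congr rfl fun l _ => ?_
          rw [← Finset.sum_filter, Finset.sum_const, nsmul_eq_mul]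
      _ = ∑ e ∈ μ, ∑ l ∈ N.Lam, (if e ∈ l then y l else 0) := Finset.sum_comm
      _ = ∑ e ∈ μ, N.edgeFlow y e := by
          refine Finset.sum_congr rfl fun e _ => ?_
          rw [Network.edgeFlow, Finset.sum_filter]
  have step4 : ∑ e ∈ μ, N.edgeFlow y e ≤ N.C2 μ :=
    Finset.sum_le_sum fun e _ => hy.2.2 e
  calc ∑ p ∈ N.P.filter (fun p => ¬ Disjoint p μ), y p
      ≤ ∑ l ∈ N.Lam, ((μ.filter (fun e => e ∈ l)).card : ℝ) * y l := step1.trans step2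
    _ = ∑ e ∈ μ, N.edgeFlow y e := step3
    _ ≤ N.C2 μ := step4


lemma aux_feasible_zero : N.Feasible (fun _ => 0) :=
  ⟨fun _ => le_refl 0, fun _ _ => rfl, fun e => by
    simpa [Network.edgeFlow] using N.c_nonneg e⟩

lemma aux_val_zero : N.val (fun _ => 0) = 0 := by simp [Network.val]

lemma aux_effVal_zero (μ : Finset N.E) : N.effVal (fun _ => 0) μ = 0 := by
  simp [Network.effVal]

lemma aux_C1_zero : N.C1 (fun _ => 0) = 0 := by
  simp [Network.C1, Network.edgeFlow]

lemma aux_effVal_empty (y : Finset N.E → ℝ) : N.effVal y ∅ = N.val y := by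
  simp [Network.effVal, Network.val]

lemma aux_C2_empty : N.C2 ∅ = 0 := by simp [Network.C2]

lemma aux_effVal_cut {K : Finset N.E} (hK : N.IsCut K) (y : Finset N.E → ℝ) :
    N.effVal y K = 0 := by
  rw [Network.effVal]
  rw [Finset.filter_false_of_mem (fun p hp => hK p hp)]
  simp

lemma aux_val_eq_Theta {x : Finset N.E → ℝ} (hx : N.IsMaxFlow x) :
    N.val x = N.Theta := by
  refine (IsGreatest.csSup_eq ?_).symm
  exact ⟨⟨x, hx.1, rfl⟩, by rintro v ⟨z, hz, rfl⟩; exact hx.2 z hz⟩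

lemma aux_effVal_nonneg {y : Finset N.E → ℝ} (hy : ∀ l, 0 ≤ y l) (μ : Finset N.E) :
    0 ≤ N.effVal y μ := Finset.sum_nonneg fun p _ => hy p

lemma aux_C1_xstar {x : Finset N.E → ℝ} (hx : N.Assumption1 x) :
    N.C1 x ≤ N.alpha * N.Theta := by
  obtain ⟨⟨hmax, hmin⟩, hpaths⟩ := hx
  have hfeas := hmax.1
  rw [aux_C1_eq]
  have hLoop : ∀ l ∈ N.Lam, l ∉ N.P → N.pathCost l * x l = 0 := by
    intro l hl hlP
    by_contra hne
    have hpos : 0 < N.pathCost l * x l :=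
      lt_of_le_of_ne (mul_nonneg (Finset.sum_nonneg fun e _ => N.b_nonneg e)
        (hfeas.1 l)) (Ne.symm hne)
    -- zero out the loop `l`
    set z : Finset N.E → ℝ := Function.update x l 0 with hz
    have hzle : ∀ m, z m ≤ x m := by
      intro m
      by_cases hm : m = l
      · simp [hz, hm, hfeas.1 l]
      · simp [hz, Function.update_of_ne hm]
    have hznn : ∀ m, 0 ≤ z m := by
      intro m
      by_cases hm : m = l
      · simp [hz, hm]
      · simp [hz, Function.update_of_ne hm]; exact hfeas.1 m
    have hzfeas : N.Feasible z := by
      refine ⟨hznn, ?_, ?_⟩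
      · intro m hm
        by_cases hml : m = l
        · simp [hz, hml]
        · simp [hz, Function.update_of_ne hml]; exact hfeas.2.1 m hm
      · intro e
        refine le_trans ?_ (hfeas.2.2 e)
        exact Finset.sum_le_sum fun m _ => hzle m
    have hzval : N.val z = N.val x := by
      refine Finset.sum_congr rfl fun p hp => ?_
      have : p ≠ l := fun h => hlP (h ▸ hp)
      simp [hz, Function.update_of_ne this]
    have hzmax : N.IsMaxFlow z :=
      ⟨hzfeas, fun w hw => (hmax.2 w hw).trans_eq hzval.symm⟩
    have hC1z : N.C1 z < N.C1 x := by
      rw [aux_C1_eq, aux_C1_eq]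
      have hsum : ∀ m ∈ N.Lam.erase l, N.pathCost m * z m = N.pathCost m * x m := by
        intro m hm
        have : m ≠ l := Finset.ne_of_mem_erase hm
        simp [hz, Function.update_of_ne this]
      rw [← Finset.add_sum_erase _ _ hl, ← Finset.add_sum_erase _ (fun m => N.pathCost m * x m) hl,
        Finset.sum_congr rfl hsum]
      simp [hz]
      linarith
    exact absurd (hmin z hzmax) (not_le.mpr hC1z)
  have hsplit : ∑ l ∈ N.Lam, N.pathCost l * x l = ∑ l ∈ N.P, N.pathCost l * x l := by
    rw [← Finset.sum_filter_add_sum_filter_not N.Lam (fun l => l ∈ N.P)]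
    have h1 : N.Lam.filter (fun l => l ∈ N.P) = N.P := by
      ext l
      simp only [Finset.mem_filter]
      exact ⟨fun h => h.2, fun h => ⟨Finset.mem_union_left _ h, h⟩⟩
    have h2 : ∑ l ∈ N.Lam.filter (fun l => l ∉ N.P), N.pathCost l * x l = 0 := by
      refine Finset.sum_eq_zero fun l hl => ?_
      rw [Finset.mem_filter] at hl
      exact hLoop l hl.1 hl.2
    rw [h1, h2, add_zero]
  rw [hsplit]
  have hval : N.val x = N.Theta := N.aux_val_eq_Theta hmax
  have : ∑ l ∈ N.P, N.pathCost l * x l = N.alpha * N.val x := by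
    rw [Network.val, Finset.mul_sum]
    refine Finset.sum_congr rfl fun p hp => ?_
    rcases lt_or_eq_of_le (hfeas.1 p) with hpos | hzero
    · rw [hpaths p hp hpos]
    · rw [← hzero, mul_zero, mul_zero]
  rw [this, hval]


end Network

lemma aux_finsupp_lin {X : Type*} (f : X →₀ ℝ) (hf1 : (f.sum fun _ w => w) = 1)
    (g h : X → ℝ) (c d e : ℝ) :
    (f.sum fun y w => w * (c * g y + d * h y + e))
      = c * (f.sum fun y w => w * g y) + d * (f.sum fun y w => w * h y) + e := by
  classical
  have hf1' : (∑ y ∈ f.support, f y) = 1 := hf1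
  show (∑ y ∈ f.support, f y * (c * g y + d * h y + e))
      = c * (∑ y ∈ f.support, f y * g y) + d * (∑ y ∈ f.support, f y * h y) + e
  calc (∑ y ∈ f.support, f y * (c * g y + d * h y + e))
      = ∑ y ∈ f.support, (c * (f y * g y) + d * (f y * h y) + f y * e) :=
        Finset.sum_congr rfl fun y _ => by ring
    _ = (∑ y ∈ f.support, (c * (f y * g y) + d * (f y * h y)))
          + ∑ y ∈ f.support, f y * e := Finset.sum_add_distrib
    _ = ((∑ y ∈ f.support, c * (f y * g y)) + ∑ y ∈ f.support, d * (f y * h y))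
          + (∑ y ∈ f.support, f y) * e := by rw [Finset.sum_add_distrib, Finset.sum_mul]
    _ = c * (∑ y ∈ f.support, f y * g y) + d * (∑ y ∈ f.support, f y * h y) + e := by
        rw [← Finset.mul_sum, ← Finset.mul_sum, hf1', one_mul]

lemma aux_finsupp_mono {X : Type*} (f : X →₀ ℝ) (hf : ∀ x, 0 ≤ f x) {g h : X → ℝ}
    (hgh : ∀ x, g x ≤ h x) :
    (f.sum fun y w => w * g y) ≤ f.sum fun y w => w * h y := by
  classical
  show (∑ y ∈ f.support, f y * g y) ≤ ∑ y ∈ f.support, f y * h y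
  exact Finset.sum_le_sum fun y _ => mul_le_mul_of_nonneg_left (hgh y) (hf y)

end Aux

/-- under Assumption 1, if `p₁ > α` and `p₂ > 1`, then at every mixed Nash
equilibrium the expected attack cost satisfies `E_{σ²*}[C₂(μ)] = (1 − α/p₁)·Θ`
(using the max-flow min-cut theorem: some minimum cut has capacity `Θ`). -/
theorem expected_attack_cost (N : Network) (p1 p2 : ℝ)
    (hp1 : N.alpha < p1) (hp2 : 1 < p2)
    (hA1 : ∃ x, N.Assumption1 x)
    (hMFMC : ∃ K, N.IsMinCut K ∧ N.C2 K = N.Theta)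
    (σ1 : N.Flow →₀ ℝ) (σ2 : Finset N.E → ℝ)
    (hNE : N.IsNE p1 p2 σ1 σ2) :
    N.expA σ2 N.C2 = (1 - N.alpha / p1) * N.Theta := by
  classical
  obtain ⟨xs, hxs⟩ := hA1
  obtain ⟨K, hK, hKT⟩ := hMFMC
  obtain ⟨hσ1, hσ2, hD, hAt⟩ := hNE
  have hσ1nn := hσ1.1
  have hσ1sum := hσ1.2
  have hσ2nn := hσ2.1
  have hσ2sum := hσ2.2
  have hα0 : 0 ≤ N.alpha := N.aux_alpha_nonneg
  have hp1pos : 0 < p1 := lt_of_le_of_lt hα0 hp1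
  have hp1ne : p1 ≠ 0 := ne_of_gt hp1pos
  have hp2pos : 0 < p2 := lt_trans one_pos hp2
  have hxsfeas : N.Feasible xs := hxs.1.1.1
  have hxsval : N.val xs = N.Theta := N.aux_val_eq_Theta hxs.1.1
  -- the inner (over-μ) expansions of the payoffs
  have inner1 : ∀ y : Finset N.E → ℝ, (∑ μ, σ2 μ * N.u1 p1 y μ)
      = p1 * (∑ μ, σ2 μ * N.effVal y μ) + (-1) * N.C1 y + 0 := by
    intro y
    calc (∑ μ, σ2 μ * N.u1 p1 y μ)
        = ∑ μ, (p1 * (σ2 μ * N.effVal y μ) - σ2 μ * N.C1 y) :=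
          Finset.sum_congr rfl fun μ _ => by
            show σ2 μ * (p1 * N.effVal y μ - N.C1 y) = _
            ring
      _ = p1 * (∑ μ, σ2 μ * N.effVal y μ) - (∑ μ, σ2 μ) * N.C1 y := by
          rw [Finset.sum_sub_distrib, ← Finset.mul_sum, ← Finset.sum_mul]
      _ = p1 * (∑ μ, σ2 μ * N.effVal y μ) + (-1) * N.C1 y + 0 := by
          rw [hσ2sum]; ring
  have inner2 : ∀ y : Finset N.E → ℝ, (∑ μ, σ2 μ * N.u2 p2 y μ)
      = p2 * N.val y + (-p2) * (∑ μ, σ2 μ * N.effVal y μ)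
          + (-(∑ μ, σ2 μ * N.C2 μ)) := by
    intro y
    calc (∑ μ, σ2 μ * N.u2 p2 y μ)
        = ∑ μ, (p2 * N.val y * σ2 μ - p2 * (σ2 μ * N.effVal y μ) - σ2 μ * N.C2 μ) :=
          Finset.sum_congr rfl fun μ _ => by
            show σ2 μ * (p2 * (N.val y - N.effVal y μ) - N.C2 μ) = _
            ring
      _ = p2 * N.val y * (∑ μ, σ2 μ) - p2 * (∑ μ, σ2 μ * N.effVal y μ)
            - ∑ μ, σ2 μ * N.C2 μ := by
          rw [Finset.sum_sub_distrib, Finset.sum_sub_distrib, ← Finset.mul_sum,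
            ← Finset.mul_sum]
      _ = _ := by rw [hσ2sum]; ring
  -- equilibrium payoffs
  have hU1eq : N.U1 p1 σ1 σ2
      = p1 * (σ1.sum fun y w => w * ∑ μ, σ2 μ * N.effVal y.1 μ)
          + (-1) * (σ1.sum fun y w => w * N.C1 y.1) + 0 := by
    have h0 : N.U1 p1 σ1 σ2
        = σ1.sum fun y w => w *
            (p1 * (∑ μ, σ2 μ * N.effVal y.1 μ) + (-1) * N.C1 y.1 + 0) := by
      show (σ1.sum fun y w => w * ∑ μ, σ2 μ * N.u1 p1 y.1 μ) = _
      exact Finsupp.sum_congr fun y _ => by rw [inner1 y.1]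
    rw [h0]
    exact aux_finsupp_lin σ1 hσ1sum _ _ p1 (-1) 0
  have hU2eq : N.U2 p2 σ1 σ2
      = p2 * (σ1.sum fun y w => w * N.val y.1)
          + (-p2) * (σ1.sum fun y w => w * ∑ μ, σ2 μ * N.effVal y.1 μ)
          + (-(∑ μ, σ2 μ * N.C2 μ)) := by
    have h0 : N.U2 p2 σ1 σ2
        = σ1.sum fun y w => w *
            (p2 * N.val y.1 + (-p2) * (∑ μ, σ2 μ * N.effVal y.1 μ)
              + (-(∑ μ, σ2 μ * N.C2 μ))) := by
      show (σ1.sum fun y w => w * ∑ μ, σ2 μ * N.u2 p2 y.1 μ) = _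
      exact Finsupp.sum_congr fun y _ => by rw [inner2 y.1]
    rw [h0]
    exact aux_finsupp_lin σ1 hσ1sum _ _ p2 (-p2) _
  -- pure defender deviations
  have hMixSingle : ∀ z : N.Flow, N.MixedF (Finsupp.single z 1) := by
    intro z
    constructor
    · intro y
      rw [Finsupp.single_apply]
      split <;> norm_num
    · exact Finsupp.sum_single_index rfl
  have hU1single : ∀ z : N.Flow,
      N.U1 p1 (Finsupp.single z 1) σ2 = ∑ μ, σ2 μ * N.u1 p1 z.1 μ := by
    intro z
    show (Finsupp.single z 1).sum (fun y w => w * ∑ μ, σ2 μ * N.u1 p1 y.1 μ) = _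
    refine Eq.trans (Finsupp.sum_single_index ?_) (one_mul _)
    exact zero_mul _
  -- deviation to the zero flow
  have h1 : 0 ≤ p1 * (σ1.sum fun y w => w * ∑ μ, σ2 μ * N.effVal y.1 μ)
      + (-1) * (σ1.sum fun y w => w * N.C1 y.1) + 0 := by
    have hdev := (hU1single _).symm.trans_le (hD (Finsupp.single (⟨fun _ => 0, N.aux_feasible_zero⟩ : N.Flow) 1)
      (hMixSingle _))
    rw [hU1eq] at hdev
    have hz : (∑ μ, σ2 μ * N.u1 p1
        ((⟨fun _ => 0, N.aux_feasible_zero⟩ : N.Flow)).1 μ) = 0 := by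
      refine Finset.sum_eq_zero fun μ _ => ?_
      have : N.u1 p1 (fun _ => 0) μ = 0 := by
        show p1 * N.effVal (fun _ => 0) μ - N.C1 (fun _ => 0) = 0
        rw [N.aux_effVal_zero, N.aux_C1_zero]; ring
      rw [this, mul_zero]
    rw [hz] at hdev
    exact hdev
  -- deviation to the MFMC flow xs
  have h2 : p1 * (N.Theta - ∑ μ, σ2 μ * N.C2 μ) - N.alpha * N.Theta
      ≤ p1 * (σ1.sum fun y w => w * ∑ μ, σ2 μ * N.effVal y.1 μ)
        + (-1) * (σ1.sum fun y w => w * N.C1 y.1) + 0 := by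
    have hdev := (hU1single _).symm.trans_le (hD (Finsupp.single (⟨xs, hxsfeas⟩ : N.Flow) 1) (hMixSingle _))
    rw [hU1eq] at hdev
    refine le_trans ?_ hdev
    rw [inner1]
    have hE : N.Theta - (∑ μ, σ2 μ * N.C2 μ) ≤ ∑ μ, σ2 μ * N.effVal xs μ := by
      have hpt : ∀ μ, σ2 μ * (N.val xs - N.C2 μ) ≤ σ2 μ * N.effVal xs μ := by
        intro μ
        refine mul_le_mul_of_nonneg_left ?_ (hσ2nn μ)
        linarith [N.aux_val_sub_effVal_le_C2 hxsfeas μ]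
      have hcalc : (∑ μ, σ2 μ * (N.val xs - N.C2 μ))
          = N.Theta - ∑ μ, σ2 μ * N.C2 μ := by
        calc (∑ μ, σ2 μ * (N.val xs - N.C2 μ))
            = N.val xs * (∑ μ, σ2 μ) - ∑ μ, σ2 μ * N.C2 μ := by
              rw [Finset.mul_sum, ← Finset.sum_sub_distrib]
              exact Finset.sum_congr rfl fun μ _ => by ring
          _ = N.Theta - ∑ μ, σ2 μ * N.C2 μ := by rw [hσ2sum, hxsval, mul_one]
      calc N.Theta - (∑ μ, σ2 μ * N.C2 μ)
          = ∑ μ, σ2 μ * (N.val xs - N.C2 μ) := hcalc.symm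
        _ ≤ ∑ μ, σ2 μ * N.effVal xs μ := Finset.sum_le_sum fun μ _ => hpt μ
    have hC1x : N.C1 xs ≤ N.alpha * N.Theta := N.aux_C1_xstar hxs
    have := mul_le_mul_of_nonneg_left hE (le_of_lt hp1pos)
    simp only [Subtype.coe_mk]
    linarith
  -- attacker deviation: attack the min cut K with prob q, nothing otherwise
  have hq1 : p1 * (1 - N.alpha / p1) = p1 - N.alpha := by field_simp
  have hqnn : 0 ≤ 1 - N.alpha / p1 := by
    have : N.alpha / p1 < 1 := (div_lt_one hp1pos).mpr hp1
    linarith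
  have h1qnn : 0 ≤ N.alpha / p1 := div_nonneg hα0 (le_of_lt hp1pos)
  set q : ℝ := 1 - N.alpha / p1 with hqdef
  have hτmix : N.MixedA (fun μ =>
      (if μ = K then q else 0) + (if μ = ∅ then 1 - q else 0)) := by
    constructor
    · intro μ
      have h1' : (0:ℝ) ≤ if μ = K then q else 0 := by split <;> [exact hqnn; exact le_rfl]
      have h2' : (0:ℝ) ≤ if μ = ∅ then 1 - q else 0 := by
        split
        · rw [hqdef]; linarith
        · exact le_refl 0
      exact add_nonneg h1' h2'
    · rw [Finset.sum_add_distrib]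
      rw [Finset.sum_ite_eq' Finset.univ K (fun _ => q),
        Finset.sum_ite_eq' Finset.univ (∅ : Finset N.E) (fun _ => 1 - q)]
      simp
  have hU2τ : N.U2 p2 σ1 (fun μ =>
      (if μ = K then q else 0) + (if μ = ∅ then 1 - q else 0))
      = (q * p2) * (σ1.sum fun y w => w * N.val y.1) + 0 *
          (σ1.sum fun y w => w * N.val y.1) + (-(q * N.Theta)) := by
    have hinner : ∀ y : Finset N.E → ℝ,
        (∑ μ, ((if μ = K then q else 0) + (if μ = ∅ then 1 - q else 0))
            * N.u2 p2 y μ)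
          = (q * p2) * N.val y + 0 * N.val y + (-(q * N.Theta)) := by
      intro y
      have hsum : (∑ μ, ((if μ = K then q else 0) + (if μ = ∅ then 1 - q else 0))
          * N.u2 p2 y μ) = q * N.u2 p2 y K + (1 - q) * N.u2 p2 y ∅ := by
        calc (∑ μ, ((if μ = K then q else 0) + (if μ = ∅ then 1 - q else 0))
              * N.u2 p2 y μ)
            = ∑ μ, ((if μ = K then q * N.u2 p2 y μ else 0)
                + (if μ = ∅ then (1 - q) * N.u2 p2 y μ else 0)) := by
              refine Finset.sum_congr rfl fun μ _ => ?_
              simp only [add_mul, ite_mul, zero_mul]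
          _ = q * N.u2 p2 y K + (1 - q) * N.u2 p2 y ∅ := by
              rw [Finset.sum_add_distrib,
                Finset.sum_ite_eq' Finset.univ K (fun μ => q * N.u2 p2 y μ),
                Finset.sum_ite_eq' Finset.univ (∅ : Finset N.E)
                  (fun μ => (1 - q) * N.u2 p2 y μ)]
              simp
      have hu2K : N.u2 p2 y K = p2 * N.val y - N.Theta := by
        show p2 * (N.val y - N.effVal y K) - N.C2 K = _
        rw [N.aux_effVal_cut hK.1, hKT]; ring
      have hu2e : N.u2 p2 y ∅ = 0 := by
        show p2 * (N.val y - N.effVal y ∅) - N.C2 ∅ = 0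
        rw [N.aux_effVal_empty, N.aux_C2_empty]; ring
      rw [hsum, hu2K, hu2e]; ring
    have h0 : N.U2 p2 σ1 (fun μ =>
        (if μ = K then q else 0) + (if μ = ∅ then 1 - q else 0))
        = σ1.sum fun y w => w *
            ((q * p2) * N.val y.1 + 0 * N.val y.1 + (-(q * N.Theta))) := by
      show (σ1.sum fun y w => w * ∑ μ,
          ((if μ = K then q else 0) + (if μ = ∅ then 1 - q else 0))
            * N.u2 p2 y.1 μ) = _
      exact Finsupp.sum_congr fun y _ => by rw [hinner y.1]
    rw [h0]
    exact aux_finsupp_lin σ1 hσ1sum _ _ (q * p2) 0 _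
  have h3 : q * (p2 * (σ1.sum fun y w => w * N.val y.1) - N.Theta)
      ≤ p2 * (σ1.sum fun y w => w * N.val y.1)
        + (-p2) * (σ1.sum fun y w => w * ∑ μ, σ2 μ * N.effVal y.1 μ)
        + (-(∑ μ, σ2 μ * N.C2 μ)) := by
    have hdev := hAt _ hτmix
    rw [hU2τ, hU2eq] at hdev
    linarith
  -- pointwise transportation-cost bound
  have h4 : N.alpha * (σ1.sum fun y w => w * N.val y.1)
      ≤ σ1.sum fun y w => w * N.C1 y.1 := by
    have hmono := aux_finsupp_mono σ1 hσ1nn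
      (g := fun y : N.Flow => N.alpha * N.val y.1) (h := fun y : N.Flow => N.C1 y.1)
      (fun y => N.aux_alpha_val_le_C1 y.2)
    calc N.alpha * (σ1.sum fun y w => w * N.val y.1)
        = σ1.sum fun y w => w * (N.alpha * N.val y.1) := by
          rw [Finsupp.mul_sum]
          exact Finsupp.sum_congr fun y _ => by ring
      _ ≤ σ1.sum fun y w => w * N.C1 y.1 := hmono
  -- final arithmetic
  show (∑ μ, σ2 μ * N.C2 μ) = (1 - N.alpha / p1) * N.Theta
  generalize hWdef : (∑ μ, σ2 μ * N.C2 μ) = W at h2 h3 ⊢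
  generalize hAdef : (σ1.sum fun y w => w * N.val y.1) = A at h3 h4
  generalize hBdef : (σ1.sum fun y w => w * ∑ μ, σ2 μ * N.effVal y.1 μ) = B at h1 h2 h3
  generalize hTdef : (σ1.sum fun y w => w * N.C1 y.1) = T at h1 h2 h4
  have h3'' : (p1 - N.alpha) * (p2 * A - N.Theta)
      ≤ p1 * (p2 * A + (-p2) * B + (-W)) := by
    have hmul := mul_le_mul_of_nonneg_left h3 (le_of_lt hp1pos)
    calc (p1 - N.alpha) * (p2 * A - N.Theta)
        = p1 * (q * (p2 * A - N.Theta)) := by rw [← hq1, hqdef]; ring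
      _ ≤ p1 * (p2 * A + (-p2) * B + (-W)) := hmul
  have hαApB : N.alpha * A ≤ p1 * B := by linarith
  have hWle : p1 * W ≤ (p1 - N.alpha) * N.Theta := by
    have hint := mul_le_mul_of_nonneg_left hαApB (le_of_lt hp2pos)
    nlinarith [h3'', hint]
  have e1 : (p1 - N.alpha) * N.Theta - p1 * W ≤ p1 * B - N.alpha * A := by
    nlinarith [h2, h4]
  have e2 : p2 * (p1 * B - N.alpha * A) ≤ (p1 - N.alpha) * N.Theta - p1 * W := by
    nlinarith [h3'']
  have hv : p1 * B - N.alpha * A ≤ 0 := by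
    by_contra hpos
    push_neg at hpos
    have hlt : 1 * (p1 * B - N.alpha * A) < p2 * (p1 * B - N.alpha * A) :=
      mul_lt_mul_of_pos_right hp2 hpos
    linarith [e1, e2]
  have hWge : (p1 - N.alpha) * N.Theta ≤ p1 * W := by linarith
  have hWeq : p1 * W = (p1 - N.alpha) * N.Theta := le_antisymm hWle hWge
  have hfin : p1 * W = p1 * ((1 - N.alpha / p1) * N.Theta) := by
    rw [hWeq, ← hq1, hqdef]; ring
  exact mul_left_cancel₀ hp1ne hfin
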